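/- arXiv:2306.08104 — 2 statements merged into one kernel-verified Lean document; each statement's English description precedes it below -/
import Mathlib

section
/- Let r ≥ 1, d ≥ 1, n_1,…,n_d ≥ 1, X = ℙ^{n_1}×⋯×ℙ^{n_d} with Cox ring S and irrelevant ideal B(X) as in the context. Let ℰ ⊆ ℕ^d be a subset such that for every u ∈ ℕ^d with dim_ℂ S_u ≥ r there exist v ∈ ℰ with dim_ℂ S_v ≥ r, an integer k ≥ 0, and w, w' ∈ ℕ^d such that: (i) v + w ∈ ℰ and dim_ℂ S_{v+w} ≥ r; (ii) v + k·w = u + w'; and (iii) for every integer l ≥ 0 the multiplication map S_w ⊗ S_{v+lw} → S_{v+(l+1)w} is surjective. Then for every B(X)-saturated homogeneous ideal I ⊆ S with H_{S/I} = h_{r,X}, one has I = ((I_ℰ) : B(X)^∞), where (I_ℰ) denotes the ideal of S generated by ⋃_{u ∈ ℰ} I_u. -/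
open MvPolynomial

noncomputable section

/-- The saturation `(I : B^∞) = {f ∈ S : f·B^k ⊆ I for some k ≥ 0}`, as a set. -/
def satSet {R : Type*} [CommRing R] (I B : Ideal R) : Set R :=
  {x | ∃ k : ℕ, ∀ g ∈ B ^ k, x * g ∈ I}

/-- The variables of the Cox ring of `X = ℙ^{n_1}×⋯×ℙ^{n_d}`. -/
abbrev PPVars (d : ℕ) (n : Fin d → ℕ) : Type := Σ i : Fin d, Fin (n i + 1)

/-- The ℤ^d-grading: `deg α_{ij} = e_i`. -/
def wPP (d : ℕ) (n : Fin d → ℕ) : PPVars d n → (Fin d → ℕ) := fun p => Pi.single p.1 1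

/-- The degree-`u` component `S_u` of the Cox ring. -/
def coxPiece (d : ℕ) (n : Fin d → ℕ) (u : Fin d → ℕ) :
    Submodule ℂ (MvPolynomial (PPVars d n) ℂ) :=
  weightedHomogeneousSubmodule ℂ (wPP d n) u

/-- The degree-`u` graded piece `I_u = I ∩ S_u` of an ideal. -/
def idealPiece (d : ℕ) (n : Fin d → ℕ) (I : Ideal (MvPolynomial (PPVars d n) ℂ))
    (u : Fin d → ℕ) : Submodule ℂ (MvPolynomial (PPVars d n) ℂ) :=
  Submodule.restrictScalars ℂ I ⊓ coxPiece d n u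

/-- A homogeneous ideal: `I = ⊕_u I_u`. -/
def IsHomog (d : ℕ) (n : Fin d → ℕ) (I : Ideal (MvPolynomial (PPVars d n) ℂ)) : Prop :=
  Submodule.restrictScalars ℂ I = ⨆ u : Fin d → ℕ, idealPiece d n I u

/-- The Hilbert function of `S/I`: `H_{S/I}(u) = dim S_u − dim I_u`. -/
def HF (d : ℕ) (n : Fin d → ℕ) (I : Ideal (MvPolynomial (PPVars d n) ℂ)) (u : Fin d → ℕ) : ℕ :=
  Module.finrank ℂ ↥(coxPiece d n u) - Module.finrank ℂ ↥(idealPiece d n I u)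

/-- The irrelevant ideal `B(X) = ∏_{i=1}^d (α_{i0},…,α_{i n_i})`. -/
def irrel (d : ℕ) (n : Fin d → ℕ) : Ideal (MvPolynomial (PPVars d n) ℂ) :=
  ∏ i : Fin d, Ideal.span (Set.range fun j : Fin (n i + 1) =>
    (X ⟨i, j⟩ : MvPolynomial (PPVars d n) ℂ))

/-- The ideal generated by the graded pieces `I_u` for `u ∈ ℰ`. -/
def idealFromDegrees (d : ℕ) (n : Fin d → ℕ) (I : Ideal (MvPolynomial (PPVars d n) ℂ))
    (E : Set (Fin d → ℕ)) : Ideal (MvPolynomial (PPVars d n) ℂ) :=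
  Ideal.span {f | ∃ u ∈ E, f ∈ I ∧ f ∈ coxPiece d n u}

namespace SuffAux

variable {d : ℕ} {n : Fin d → ℕ}

lemma mem_coxPiece {u : Fin d → ℕ} {f : MvPolynomial (PPVars d n) ℂ} :
    f ∈ coxPiece d n u ↔ f.IsWeightedHomogeneous (wPP d n) u := Iff.rfl

lemma mem_idealPiece {I : Ideal (MvPolynomial (PPVars d n) ℂ)} {u : Fin d → ℕ}
    {f : MvPolynomial (PPVars d n) ℂ} :
    f ∈ idealPiece d n I u ↔ f ∈ I ∧ f ∈ coxPiece d n u := by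
  rw [idealPiece, Submodule.mem_inf, Submodule.restrictScalars_mem]

lemma weight_apply_coord (σ : PPVars d n →₀ ℕ) (i : Fin d) :
    Finsupp.weight (wPP d n) σ i = ∑ p ∈ σ.support, if p.1 = i then σ p else 0 := by
  rw [Finsupp.weight_apply, Finsupp.sum]
  rw [Finset.sum_apply]
  apply Finset.sum_congr rfl
  intro p _
  simp [wPP, Pi.single_apply, Pi.smul_apply, mul_ite, eq_comm]

lemma weight_single (p : PPVars d n) (c : ℕ) :
    Finsupp.weight (wPP d n) (Finsupp.single p c) = Pi.single p.1 c := by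
  rw [Finsupp.weight_apply, Finsupp.sum_single_index]
  · funext j
    simp [wPP, Pi.single_apply]
  · simp

/-- the exponent of the standard monomial of multidegree `u` -/
def expu (u : Fin d → ℕ) : PPVars d n →₀ ℕ := ∑ i, Finsupp.single ⟨i, 0⟩ (u i)

lemma weight_expu (u : Fin d → ℕ) :
    Finsupp.weight (wPP d n) (expu (n := n) u) = u := by
  rw [expu, map_sum]
  have : ∀ i : Fin d, Finsupp.weight (wPP d n) (Finsupp.single (⟨i, 0⟩ : PPVars d n) (u i))
      = Pi.single i (u i) := fun i => weight_single _ _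
  rw [Finset.sum_congr rfl fun i _ => this i]
  exact Finset.univ_sum_single u

lemma monomial_expu_mem (u : Fin d → ℕ) :
    (monomial (expu (n := n) u) (1 : ℂ)) ∈ coxPiece d n u := by
  rw [mem_coxPiece]
  exact isWeightedHomogeneous_monomial _ _ _ (weight_expu u)

lemma monomial_expu_ne_zero (u : Fin d → ℕ) :
    (monomial (expu (n := n) u) (1 : ℂ)) ≠ 0 := by
  simp [MvPolynomial.monomial_eq_zero]


lemma exists_split : ∀ (N : ℕ) (a b : Fin d → ℕ) (σ : PPVars d n →₀ ℕ),
    (∑ i, a i) = N → Finsupp.weight (wPP d n) σ = a + b →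
    ∃ σ₁ σ₂, σ = σ₁ + σ₂ ∧ Finsupp.weight (wPP d n) σ₁ = a ∧
      Finsupp.weight (wPP d n) σ₂ = b := by
  intro N
  induction N with
  | zero =>
    intro a b σ hN h
    have ha : a = 0 := by
      funext i
      exact Finset.sum_eq_zero_iff.mp hN i (Finset.mem_univ i)
    refine ⟨0, σ, by simp, by simp [ha], ?_⟩
    rw [h, ha, zero_add]
  | succ N ih =>
    intro a b σ hN h
    have hex : ∃ i, a i ≠ 0 := by
      by_contra hc
      push_neg at hc
      rw [Finset.sum_eq_zero (fun i _ => hc i)] at hN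
      exact (Nat.succ_ne_zero N hN.symm).elim
    obtain ⟨i, hi⟩ := hex
    have hwi : Finsupp.weight (wPP d n) σ i ≠ 0 := by
      rw [h]
      have : a i + b i ≠ 0 := by omega
      simpa using this
    have hp : ∃ p ∈ σ.support, p.1 = i := by
      by_contra hc
      push_neg at hc
      rw [weight_apply_coord] at hwi
      exact hwi (Finset.sum_eq_zero fun p hps => if_neg (hc p hps))
    obtain ⟨p, hps, hpi⟩ := hp
    have hσp : 1 ≤ σ p := Nat.one_le_iff_ne_zero.mpr (Finsupp.mem_support_iff.mp hps)
    set σ' := σ - Finsupp.single p 1 with hσ'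
    have hdec : σ = Finsupp.single p 1 + σ' := by
      ext q
      rw [Finsupp.add_apply, hσ', Finsupp.tsub_apply, Finsupp.single_apply]
      by_cases hq : p = q
      · subst hq
        rw [if_pos rfl]
        omega
      · rw [if_neg hq]
        omega
    set a' := a - Pi.single i 1 with ha'
    have hadec : a = Pi.single i 1 + a' := by
      funext j
      rw [Pi.add_apply, ha', Pi.sub_apply, Pi.single_apply]
      by_cases hj : j = i
      · subst hj
        rw [if_pos rfl]
        omega
      · rw [if_neg hj]
        omega
    have huple : Finsupp.weight (wPP d n) σ
        = Pi.single i 1 + Finsupp.weight (wPP d n) σ' := by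
      conv_lhs => rw [hdec]
      rw [map_add, weight_single, hpi]
    have hw' : Finsupp.weight (wPP d n) σ' = a' + b := by
      have : Pi.single i 1 + Finsupp.weight (wPP d n) σ'
          = Pi.single i 1 + (a' + b) := by
        rw [← huple, h, hadec, add_assoc]
      exact add_left_cancel this
    have hN' : ∑ j, a' j = N := by
      have h1 : ∑ j, a j = (∑ j, (Pi.single i 1 : Fin d → ℕ) j) + ∑ j, a' j := by
        conv_lhs => rw [hadec]
        rw [← Finset.sum_add_distrib]
        rfl
      have h2 : ∑ j, (Pi.single i 1 : Fin d → ℕ) j = 1 := by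
        simp [Pi.single_apply]
      omega
    obtain ⟨σ₁', σ₂, h1, h2, h3⟩ := ih a' b σ' hN' hw'
    refine ⟨Finsupp.single p 1 + σ₁', σ₂, ?_, ?_, h3⟩
    · rw [hdec, h1, add_assoc]
    · rw [map_add, weight_single, hpi, h2, ← hadec]

lemma coxPiece_mul (a b : Fin d → ℕ) :
    coxPiece d n a * coxPiece d n b = coxPiece d n (a + b) := by
  apply le_antisymm
  · apply Submodule.mul_le.mpr
    intro f hf g hg
    exact (mem_coxPiece.mp hf).mul (mem_coxPiece.mp hg)
  · intro f hf
    have hsum : ∑ σ ∈ f.support, monomial σ (coeff σ f) = f :=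
      MvPolynomial.support_sum_monomial_coeff f
    rw [← hsum]
    apply Submodule.sum_mem
    intro σ hσ
    have hw : Finsupp.weight (wPP d n) σ = a + b :=
      (mem_coxPiece.mp hf) (MvPolynomial.mem_support_iff.mp hσ)
    obtain ⟨σ₁, σ₂, hdec, h1, h2⟩ := exists_split (∑ i, a i) a b σ rfl hw
    have : monomial σ (coeff σ f) = monomial σ₁ (coeff σ f) * monomial σ₂ 1 := by
      rw [MvPolynomial.monomial_mul, mul_one, ← hdec]
    rw [this]
    exact Submodule.mul_mem_mul
      (mem_coxPiece.mpr (isWeightedHomogeneous_monomial _ _ _ h1))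
      (mem_coxPiece.mpr (isWeightedHomogeneous_monomial _ _ _ h2))

-- finite dimensionality
lemma coxPiece_le_restrictTotalDegree (u : Fin d → ℕ) :
    coxPiece d n u ≤ restrictTotalDegree (PPVars d n) ℂ (∑ i, u i) := by
  intro f hf
  rw [MvPolynomial.mem_restrictTotalDegree, MvPolynomial.totalDegree]
  apply Finset.sup_le
  intro σ hσ
  have hw := (mem_coxPiece.mp hf) (MvPolynomial.mem_support_iff.mp hσ)
  have hkey : (σ.sum fun _ e => e) = ∑ i, u i := by
    have h2 : ∀ p : PPVars d n, σ p = ∑ i, (if p.1 = i then σ p else 0) := by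
      intro p
      rw [Finset.sum_ite_eq (Finset.univ) p.1 (fun _ => σ p), if_pos (Finset.mem_univ _)]
    calc (σ.sum fun _ e => e) = ∑ p ∈ σ.support, σ p := rfl
      _ = ∑ p ∈ σ.support, ∑ i, (if p.1 = i then σ p else 0) :=
          Finset.sum_congr rfl fun p _ => h2 p
      _ = ∑ i, ∑ p ∈ σ.support, (if p.1 = i then σ p else 0) := Finset.sum_comm
      _ = ∑ i, u i := by
          refine Finset.sum_congr rfl fun i _ => ?_
          rw [← weight_apply_coord, hw]
  exact le_of_eq hkey

instance coxPiece_fd (u : Fin d → ℕ) : FiniteDimensional ℂ (coxPiece d n u) :=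
  Submodule.finiteDimensional_of_le (coxPiece_le_restrictTotalDegree u)

instance idealPiece_fd (I : Ideal (MvPolynomial (PPVars d n) ℂ)) (u : Fin d → ℕ) :
    FiniteDimensional ℂ (idealPiece d n I u) :=
  Submodule.finiteDimensional_of_le (inf_le_right : idealPiece d n I u ≤ coxPiece d n u)

lemma finrank_coxPiece_mono (u v : Fin d → ℕ) :
    Module.finrank ℂ (coxPiece d n u) ≤ Module.finrank ℂ (coxPiece d n (u + v)) := by
  set μ := monomial (expu (n := n) v) (1 : ℂ) with hμdef
  have hμ : μ ∈ coxPiece d n v := monomial_expu_mem v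
  have hmaps : ∀ x ∈ coxPiece d n u, (LinearMap.mulLeft ℂ μ) x ∈ coxPiece d n (u + v) := by
    intro x hx
    have h1 := (mem_coxPiece.mp hμ).mul (mem_coxPiece.mp hx)
    rw [add_comm v u] at h1
    exact h1
  have hinj : Function.Injective ((LinearMap.mulLeft ℂ μ).restrict hmaps) := by
    intro x y hxy
    have h1 : μ * (x : MvPolynomial (PPVars d n) ℂ) = μ * (y : MvPolynomial (PPVars d n) ℂ) := by
      have := congrArg Subtype.val hxy
      simpa [LinearMap.restrict_apply] using this
    exact Subtype.ext (mul_left_cancel₀ (monomial_expu_ne_zero v) h1)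
  exact LinearMap.finrank_le_finrank_of_injective hinj

-- span lemmas
lemma span_mul_span_le (a b : Fin d → ℕ) :
    Ideal.span (coxPiece d n a : Set (MvPolynomial (PPVars d n) ℂ)) * Ideal.span (coxPiece d n b : Set (MvPolynomial (PPVars d n) ℂ))
      ≤ Ideal.span (coxPiece d n (a + b) : Set (MvPolynomial (PPVars d n) ℂ)) := by
  rw [Ideal.span_mul_span', Ideal.span_le]
  rintro f ⟨x, hx, y, hy, rfl⟩
  exact Ideal.subset_span ((coxPiece_mul a b) ▸ Submodule.mul_mem_mul hx hy)

lemma span_piece_add_le (a b : Fin d → ℕ) :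
    Ideal.span (coxPiece d n (a + b) : Set (MvPolynomial (PPVars d n) ℂ)) ≤ Ideal.span (coxPiece d n a : Set (MvPolynomial (PPVars d n) ℂ)) := by
  rw [Ideal.span_le]
  intro f hf
  rw [SetLike.mem_coe] at hf
  rw [← coxPiece_mul] at hf
  rw [SetLike.mem_coe]
  refine Submodule.mul_induction_on hf (fun x hx y hy => ?_) (fun x y hx hy => ?_)
  · exact Ideal.mul_mem_right _ _ (Ideal.subset_span hx)
  · exact Ideal.add_mem _ hx hy

lemma span_piece_zero : Ideal.span (coxPiece d n 0 : Set (MvPolynomial (PPVars d n) ℂ)) = ⊤ := by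
  rw [Ideal.eq_top_iff_one]
  exact Ideal.subset_span (mem_coxPiece.mpr (isWeightedHomogeneous_one ℂ _))

lemma prod_span_le (s : Finset (Fin d)) :
    (∏ i ∈ s, Ideal.span (Set.range fun j : Fin (n i + 1) =>
        (X ⟨i, j⟩ : MvPolynomial (PPVars d n) ℂ)))
      ≤ Ideal.span (coxPiece d n (∑ i ∈ s, Pi.single i 1) : Set (MvPolynomial (PPVars d n) ℂ)) := by
  classical
  induction s using Finset.induction with
  | empty =>
    rw [Finset.prod_empty, Finset.sum_empty, span_piece_zero, Ideal.one_eq_top]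
  | @insert i s hnotmem ih =>
    rw [Finset.prod_insert hnotmem, Finset.sum_insert hnotmem]
    have h1 : Ideal.span (Set.range fun j : Fin (n i + 1) =>
        (X ⟨i, j⟩ : MvPolynomial (PPVars d n) ℂ))
        ≤ Ideal.span (coxPiece d n (Pi.single i 1) : Set (MvPolynomial (PPVars d n) ℂ)) := by
      rw [Ideal.span_le]
      rintro f ⟨j, rfl⟩
      exact Ideal.subset_span (mem_coxPiece.mpr (isWeightedHomogeneous_X ℂ _ _))
    exact le_trans (Ideal.mul_mono h1 ih) (span_mul_span_le _ _)

lemma irrel_pow_le (w₀ : Fin d → ℕ) :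
    irrel d n ^ (∑ i, w₀ i) ≤ Ideal.span (coxPiece d n w₀ : Set (MvPolynomial (PPVars d n) ℂ)) := by
  set k := ∑ i, w₀ i with hk
  have honeV : (∑ i : Fin d, Pi.single i 1 : Fin d → ℕ) = fun _ => 1 :=
    Finset.univ_sum_single (fun _ => 1 : Fin d → ℕ)
  have h1 : irrel d n ≤ Ideal.span (coxPiece d n (fun _ => 1) : Set (MvPolynomial (PPVars d n) ℂ)) := by
    have := prod_span_le (n := n) Finset.univ
    rwa [honeV] at this
  have h2 : ∀ m : ℕ, irrel d n ^ m
      ≤ Ideal.span (coxPiece d n (fun _ => m) : Set (MvPolynomial (PPVars d n) ℂ)) := by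
    intro m
    induction m with
    | zero =>
      have : (fun _ : Fin d => (0 : ℕ)) = (0 : Fin d → ℕ) := rfl
      rw [pow_zero, this, span_piece_zero, Ideal.one_eq_top]
    | succ m ihm =>
      rw [pow_succ]
      have h3 : ((fun _ : Fin d => m) + fun _ => 1 : Fin d → ℕ) = fun _ => m + 1 := rfl
      have := le_trans (Ideal.mul_mono ihm h1) (span_mul_span_le (fun _ => m) (fun _ => 1))
      rwa [h3] at this
  refine le_trans (h2 k) ?_
  have hdecomp : (fun _ : Fin d => k) = w₀ + fun i => k - w₀ i := by
    funext i
    have : w₀ i ≤ k := Finset.single_le_sum (fun _ _ => Nat.zero_le _) (Finset.mem_univ i)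
    simp only [Pi.add_apply]
    omega
  rw [hdecomp]
  exact span_piece_add_le _ _

lemma mem_satSet_of_mul_piece (J : Ideal (MvPolynomial (PPVars d n) ℂ))
    (f : MvPolynomial (PPVars d n) ℂ) (w₀ : Fin d → ℕ)
    (h : ∀ s ∈ coxPiece d n w₀, f * s ∈ J) : f ∈ satSet J (irrel d n) := by
  refine ⟨∑ i, w₀ i, fun g hg => ?_⟩
  have hg' : g ∈ Ideal.span (coxPiece d n w₀ : Set (MvPolynomial (PPVars d n) ℂ)) := irrel_pow_le w₀ hg
  have hle : Ideal.span (coxPiece d n w₀ : Set (MvPolynomial (PPVars d n) ℂ)) ≤ J.colon (Ideal.span {f}) := by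
    rw [Ideal.span_le]
    intro s hs
    rw [SetLike.mem_coe, Ideal.mem_colon_span_singleton, mul_comm]
    exact h s hs
  have := hle hg'
  rw [Ideal.mem_colon_span_singleton] at this
  rwa [mul_comm] at this


lemma exists_nzd (I : Ideal (MvPolynomial (PPVars d n) ℂ))
    (hsat : ∀ (w₀ : Fin d → ℕ) (g : MvPolynomial (PPVars d n) ℂ),
      (∀ s ∈ coxPiece d n w₀, g * s ∈ I) → g ∈ I)
    (w : Fin d → ℕ) :
    ∃ θ ∈ coxPiece d n w, ∀ g, θ * g ∈ I → g ∈ I := by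
  classical
  obtain ⟨t, htI, htP, -, htmin⟩ := Ideal.IsLasker.minimal (Submodule.isLasker (MvPolynomial (PPVars d n) ℂ) _) I
  by_contra hcon
  push_neg at hcon
  set W := coxPiece d n w with hW
  set sSub : Finset (Subspace ℂ W) :=
    t.image (fun J => Submodule.comap W.subtype (Submodule.restrictScalars ℂ (Ideal.radical J)))
    with hsSub
  have hcov : (⋃ p ∈ sSub, (p : Set W)) = Set.univ := by
    rw [Set.eq_univ_iff_forall]
    intro θ
    obtain ⟨g, hθg, hgI⟩ := hcon θ.1 θ.2
    have hgJ : ∃ J ∈ t, g ∉ J := by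
      by_contra hc
      push_neg at hc
      exact hgI (htI ▸ Submodule.mem_finsetInf.mpr (fun J hJ => hc J hJ))
    obtain ⟨J, hJt, hgJ⟩ := hgJ
    have hθgJ : θ.1 * g ∈ J := by
      have hle : I ≤ J := htI ▸ Finset.inf_le hJt
      exact hle hθg
    have hrad : θ.1 ∈ Ideal.radical J := by
      have := (Ideal.isPrimary_iff.mp (htP hJt)).2 (x := g) (y := θ.1) (by rwa [mul_comm])
      exact this.resolve_left hgJ
    refine Set.mem_biUnion (Finset.mem_coe.mpr (Finset.mem_image_of_mem _ hJt)) ?_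
    exact hrad
  have htop : (⊤ : Subspace ℂ W) ∈ sSub := Subspace.top_mem_of_biUnion_eq_univ hcov
  obtain ⟨J, hJt, hJtop⟩ := Finset.mem_image.mp htop
  have hWrad : ∀ x ∈ W, x ∈ Ideal.radical J := fun x hx =>
    Submodule.comap_subtype_eq_top.mp hJtop hx
  set N : Ideal (MvPolynomial (PPVars d n) ℂ) :=
    Ideal.span (W : Set (MvPolynomial (PPVars d n) ℂ)) with hN
  have hNrad : N ≤ Ideal.radical J := Ideal.span_le.mpr fun x hx => hWrad x hx
  obtain ⟨c, hc⟩ := Ideal.exists_pow_le_of_le_radical_of_fg hNrad (IsNoetherian.noetherian N)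
  have hpow : ∀ m : ℕ, ∀ x ∈ coxPiece d n (m • w), x ∈ N ^ m := by
    intro m
    induction m with
    | zero =>
      intro x _
      rw [pow_zero, Ideal.one_eq_top]
      exact Submodule.mem_top
    | succ m ihm =>
      intro x hx
      have hx' : x ∈ coxPiece d n (m • w) * coxPiece d n w := by
        rw [coxPiece_mul]
        rwa [succ_nsmul] at hx
      rw [pow_succ]
      refine Submodule.mul_induction_on hx' (fun a ha b hb => ?_) (fun a b ha hb => ?_)
      · exact Ideal.mul_mem_mul (ihm a ha) (Ideal.subset_span hb)
      · exact Ideal.add_mem _ ha hb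
  obtain ⟨g, hg_in, hg_nJ⟩ := SetLike.not_le_iff_exists.mp (htmin hJt)
  have hgI : ∀ s ∈ coxPiece d n (c • w), g * s ∈ I := by
    intro s hs
    rw [← htI, Submodule.mem_finsetInf]
    intro K hKt
    by_cases hKJ : K = J
    · subst hKJ
      exact Ideal.mul_mem_left _ g (hc (hpow c s hs))
    · have hgK : g ∈ K := by
        have hK' : K ∈ t.erase J := Finset.mem_erase.mpr ⟨hKJ, hKt⟩
        exact (Submodule.mem_finsetInf.mp hg_in) K hK'
      exact Ideal.mul_mem_right _ _ hgK
  have hgI' : g ∈ I := hsat (c • w) g hgI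
  exact hg_nJ ((htI ▸ Finset.inf_le hJt) hgI')


lemma deg_succ (v w : Fin d → ℕ) (m : ℕ) : w + (v + m • w) = v + (m + 1) • w := by
  rw [succ_nsmul]
  funext i
  simp only [Pi.add_apply, Pi.smul_apply, smul_eq_mul]
  ring

section Chain

variable (I J : Ideal (MvPolynomial (PPVars d n) ℂ)) (r : ℕ) (v w : Fin d → ℕ)
  (θ : MvPolynomial (PPVars d n) ℂ)

lemma theta_ne_zero (hItop : I ≠ ⊤) (hθ : ∀ g, θ * g ∈ I → g ∈ I) : θ ≠ 0 := by
  intro h0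
  apply hItop
  rw [Ideal.eq_top_iff_one]
  exact hθ 1 (by rw [h0, zero_mul]; exact I.zero_mem)

lemma surj_step (hItop : I ≠ ⊤) (hθW : θ ∈ coxPiece d n w)
    (hθ : ∀ g, θ * g ∈ I → g ∈ I)
    (hd0 : ∀ m : ℕ, Module.finrank ℂ (idealPiece d n I (v + m • w)) + r
        = Module.finrank ℂ (coxPiece d n (v + m • w)))
    (m : ℕ) :
    coxPiece d n (v + (m + 1) • w)
      ≤ Submodule.map (LinearMap.mulLeft ℂ θ) (coxPiece d n (v + m • w))
        ⊔ idealPiece d n I (v + (m + 1) • w) := by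
  have hθ0 : θ ≠ 0 := theta_ne_zero I θ hItop hθ
  have hinj : Function.Injective (LinearMap.mulLeft ℂ θ) := by
    intro a b hab
    simp only [LinearMap.mulLeft_apply] at hab
    exact mul_left_cancel₀ hθ0 hab
  set A := Submodule.map (LinearMap.mulLeft ℂ θ) (coxPiece d n (v + m • w)) with hA
  set B := idealPiece d n I (v + (m + 1) • w) with hB
  have hAle : A ≤ coxPiece d n (v + (m + 1) • w) := by
    rintro y ⟨x, hx, rfl⟩
    have h1 : θ * x ∈ coxPiece d n (w + (v + m • w)) :=
      mem_coxPiece.mpr ((mem_coxPiece.mp hθW).mul (mem_coxPiece.mp hx))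
    rw [deg_succ] at h1
    exact h1
  have hBle : B ≤ coxPiece d n (v + (m + 1) • w) := inf_le_right
  haveI : FiniteDimensional ℂ A :=
    Submodule.finiteDimensional_of_le hAle
  haveI : FiniteDimensional ℂ B :=
    Submodule.finiteDimensional_of_le hBle
  have hInf : A ⊓ B = Submodule.map (LinearMap.mulLeft ℂ θ) (idealPiece d n I (v + m • w)) := by
    apply le_antisymm
    · rintro y ⟨hyA, hyB⟩
      obtain ⟨x, hx, rfl⟩ := hyA
      have hyI : (LinearMap.mulLeft ℂ θ) x ∈ I := (mem_idealPiece.mp hyB).1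
      rw [LinearMap.mulLeft_apply] at hyI
      have hxI : x ∈ I := hθ x hyI
      exact ⟨x, mem_idealPiece.mpr ⟨hxI, hx⟩, rfl⟩
    · rintro y ⟨x, hx, rfl⟩
      obtain ⟨hxI, hxS⟩ := mem_idealPiece.mp hx
      constructor
      · exact ⟨x, hxS, rfl⟩
      · refine mem_idealPiece.mpr ⟨?_, ?_⟩
        · rw [LinearMap.mulLeft_apply]
          exact Ideal.mul_mem_left _ _ hxI
        · apply hAle
          exact ⟨x, hxS, rfl⟩
  have frA : Module.finrank ℂ A = Module.finrank ℂ (coxPiece d n (v + m • w)) :=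
    (LinearEquiv.finrank_eq
      (Submodule.equivMapOfInjective (LinearMap.mulLeft ℂ θ) hinj
        (coxPiece d n (v + m • w)))).symm
  have frInf : Module.finrank ℂ ↥(A ⊓ B)
      = Module.finrank ℂ (idealPiece d n I (v + m • w)) := by
    rw [hInf]
    exact (LinearEquiv.finrank_eq
      (Submodule.equivMapOfInjective (LinearMap.mulLeft ℂ θ) hinj
        (idealPiece d n I (v + m • w)))).symm
  have hsum := Submodule.finrank_sup_add_finrank_inf_eq A B
  have hIam : Module.finrank ℂ (idealPiece d n I (v + m • w))
      ≤ Module.finrank ℂ (coxPiece d n (v + m • w)) :=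
    Submodule.finrank_mono (inf_le_right : idealPiece d n I (v + m • w) ≤ _)
  have hfr : Module.finrank ℂ ↥(A ⊔ B)
      = Module.finrank ℂ (coxPiece d n (v + (m + 1) • w)) := by
    have e1 := hd0 m
    have e2 := hd0 (m + 1)
    have e3 : Module.finrank ℂ ↥B
        = Module.finrank ℂ (idealPiece d n I (v + (m + 1) • w)) := rfl
    omega
  have : A ⊔ B = coxPiece d n (v + (m + 1) • w) :=
    Submodule.eq_of_le_of_finrank_le (sup_le hAle hBle) (le_of_eq hfr.symm)
  exact le_of_eq this.symm

lemma chain (hItop : I ≠ ⊤) (hθW : θ ∈ coxPiece d n w)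
    (hθ : ∀ g, θ * g ∈ I → g ∈ I)
    (hd0 : ∀ m : ℕ, Module.finrank ℂ (idealPiece d n I (v + m • w)) + r
        = Module.finrank ℂ (coxPiece d n (v + m • w)))
    (h0 : ∀ x ∈ idealPiece d n I v, x ∈ J)
    (h1 : ∀ x ∈ idealPiece d n I (v + w), x ∈ J) :
    ∀ m : ℕ, ∀ x ∈ idealPiece d n I (v + m • w), x ∈ J := by
  intro m
  induction m with
  | zero =>
    intro x hx
    apply h0
    rwa [zero_smul, add_zero] at hx
  | succ m ihm =>
    cases m with
    | zero =>
      intro x hx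
      apply h1
      rwa [zero_add, one_smul] at hx
    | succ m' =>
      intro x hx
      obtain ⟨hxI, hxS⟩ := mem_idealPiece.mp hx
      have hfact : x ∈ coxPiece d n w * coxPiece d n (v + (m' + 1) • w) := by
        rw [coxPiece_mul, deg_succ]
        exact hxS
      have hsub : coxPiece d n w * coxPiece d n (v + (m' + 1) • w)
          ≤ Submodule.map (LinearMap.mulLeft ℂ θ) (coxPiece d n (v + (m' + 1) • w))
            ⊔ (coxPiece d n w * idealPiece d n I (v + (m' + 1) • w)) := by
        refine le_trans (mul_le_mul_right
          (surj_step I r v w θ hItop hθW hθ hd0 m') _) ?_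
        rw [Submodule.mul_sup]
        apply sup_le_sup ?_ le_rfl
        apply Submodule.mul_le.mpr
        rintro a ha y ⟨z, hz, rfl⟩
        have h1' : a * (θ * z) = θ * (a * z) := by ring
        rw [LinearMap.mulLeft_apply, h1']
        refine ⟨a * z, ?_, rfl⟩
        have h2 : a * z ∈ coxPiece d n w * coxPiece d n (v + m' • w) :=
          Submodule.mul_mem_mul ha hz
        rw [coxPiece_mul, deg_succ] at h2
        exact h2
      obtain ⟨y, hy, z, hz, hxyz⟩ := Submodule.mem_sup.mp (hsub hfact)
      obtain ⟨g, hg, rfl⟩ := hy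
      rw [LinearMap.mulLeft_apply] at hxyz
      have hzI : z ∈ I := by
        refine Submodule.mul_induction_on hz (fun a _ b hb => ?_) (fun a b ha hb => ?_)
        · exact Ideal.mul_mem_left _ a (mem_idealPiece.mp hb).1
        · exact Ideal.add_mem _ ha hb
      have hzJ : z ∈ J := by
        refine Submodule.mul_induction_on hz (fun a _ b hb => ?_) (fun a b ha hb => ?_)
        · exact Ideal.mul_mem_left _ a (ihm b hb)
        · exact Ideal.add_mem _ ha hb
      have hθgI : θ * g ∈ I := by
        have : θ * g = x - z := by rw [← hxyz]; ring
        rw [this]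
        exact Ideal.sub_mem _ hxI hzI
      have hgI : g ∈ I := hθ g hθgI
      have hgJ : g ∈ J := ihm g (mem_idealPiece.mpr ⟨hgI, hg⟩)
      rw [← hxyz]
      exact Ideal.add_mem _ (Ideal.mul_mem_left _ θ hgJ) hzJ

end Chain

end SuffAux

open SuffAux in
/-- Lemma 5.3: the criterion for a subset `ℰ ⊆ Eff(X) = ℕ^d` to be `(r,X)`-sufficient for a
product of projective spaces: every `B(X)`-saturated homogeneous ideal with Hilbert function
`h_{r,X}` is recovered from its graded pieces in degrees belonging to `ℰ` by saturating. -/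
theorem sufficient_subset_criterion (r d : ℕ) (hr : 1 ≤ r) (hd : 1 ≤ d)
    (n : Fin d → ℕ) (hn : ∀ i, 1 ≤ n i)
    (E : Set (Fin d → ℕ))
    (hE : ∀ u : Fin d → ℕ, r ≤ Module.finrank ℂ ↥(coxPiece d n u) →
      ∃ v ∈ E, r ≤ Module.finrank ℂ ↥(coxPiece d n v) ∧
        ∃ (k : ℕ) (w w' : Fin d → ℕ),
          (v + w ∈ E ∧ r ≤ Module.finrank ℂ ↥(coxPiece d n (v + w))) ∧
          v + k • w = u + w' ∧
          ∀ l : ℕ, coxPiece d n w * coxPiece d n (v + l • w) = coxPiece d n (v + (l + 1) • w))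
    (I : Ideal (MvPolynomial (PPVars d n) ℂ))
    (hIhom : IsHomog d n I)
    (hIsat : satSet I (irrel d n) = (I : Set (MvPolynomial (PPVars d n) ℂ)))
    (hIHF : ∀ u : Fin d → ℕ, HF d n I u = min (Module.finrank ℂ ↥(coxPiece d n u)) r) :
    satSet (idealFromDegrees d n I E) (irrel d n) =
      (I : Set (MvPolynomial (PPVars d n) ℂ)) := by
  classical
  have hdim1 : ∀ u2 : Fin d → ℕ, 1 ≤ Module.finrank ℂ (coxPiece d n u2) := by
    intro u2
    have hnt : Nontrivial (coxPiece d n u2) := by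
      refine ⟨⟨⟨_, monomial_expu_mem u2⟩, 0, ?_⟩⟩
      simp only [ne_eq, Submodule.mk_eq_zero]
      exact monomial_expu_ne_zero u2
    exact Module.finrank_pos_iff.mpr hnt
  have hItop : I ≠ ⊤ := by
    intro htop
    have h := hIHF 0
    have hIp : idealPiece d n I 0 = coxPiece d n 0 := by
      rw [idealPiece, htop]
      simp
    rw [HF, hIp] at h
    have h1 := hdim1 0
    omega
  have hsatKey : ∀ (w₀ : Fin d → ℕ) (g : MvPolynomial (PPVars d n) ℂ),
      (∀ s ∈ coxPiece d n w₀, g * s ∈ I) → g ∈ I := by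
    intro w₀ g hg
    have hmem := mem_satSet_of_mul_piece I g w₀ hg
    rw [hIsat] at hmem
    exact hmem
  set J := idealFromDegrees d n I E with hJdef
  have hJI : J ≤ I := by
    rw [hJdef, idealFromDegrees, Ideal.span_le]
    rintro f ⟨u, -, hfI, -⟩
    exact hfI
  apply Set.Subset.antisymm
  · rintro x ⟨k, hk⟩
    have hx : x ∈ satSet I (irrel d n) := ⟨k, fun g hg => hJI (hk g hg)⟩
    rwa [hIsat] at hx
  · intro x hxI
    have hsatJ_zero : (0 : MvPolynomial (PPVars d n) ℂ) ∈ satSet J (irrel d n) :=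
      ⟨0, fun g _ => by rw [zero_mul]; exact J.zero_mem⟩
    set K : Submodule ℂ (MvPolynomial (PPVars d n) ℂ) :=
      { carrier := satSet J (irrel d n)
        add_mem' := by
          rintro a b ⟨k1, h1⟩ ⟨k2, h2⟩
          refine ⟨max k1 k2, fun g hg => ?_⟩
          have hg1 : g ∈ irrel d n ^ k1 :=
            Ideal.pow_le_pow_right (le_max_left k1 k2) hg
          have hg2 : g ∈ irrel d n ^ k2 :=
            Ideal.pow_le_pow_right (le_max_right k1 k2) hg
          rw [add_mul]
          exact J.add_mem (h1 g hg1) (h2 g hg2)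
        zero_mem' := hsatJ_zero
        smul_mem' := by
          rintro c a ⟨k1, h1⟩
          refine ⟨k1, fun g hg => ?_⟩
          rw [smul_mul_assoc]
          exact Submodule.smul_mem (Submodule.restrictScalars ℂ J) c (h1 g hg) } with hK
    have hclaim : ∀ u : Fin d → ℕ, idealPiece d n I u ≤ K := by
      intro u
      by_cases hru : r ≤ Module.finrank ℂ (coxPiece d n u)
      · obtain ⟨v, hvE, hrv, k, w, w', ⟨hvwE, -⟩, hvk, -⟩ := hE u hru
        obtain ⟨θ, hθW, hθ⟩ := exists_nzd I hsatKey w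
        have hd0 : ∀ m : ℕ, Module.finrank ℂ (idealPiece d n I (v + m • w)) + r
            = Module.finrank ℂ (coxPiece d n (v + m • w)) := by
          intro m
          have hmono := finrank_coxPiece_mono (n := n) v (m • w)
          have hHF := hIHF (v + m • w)
          rw [HF] at hHF
          have hle : Module.finrank ℂ (idealPiece d n I (v + m • w))
              ≤ Module.finrank ℂ (coxPiece d n (v + m • w)) :=
            Submodule.finrank_mono inf_le_right
          omega
        have h0 : ∀ x ∈ idealPiece d n I v, x ∈ J := by
          intro y hy
          exact Ideal.subset_span ⟨v, hvE, (mem_idealPiece.mp hy).1, (mem_idealPiece.mp hy).2⟩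
        have h1 : ∀ x ∈ idealPiece d n I (v + w), x ∈ J := by
          intro y hy
          exact Ideal.subset_span
            ⟨v + w, hvwE, (mem_idealPiece.mp hy).1, (mem_idealPiece.mp hy).2⟩
        have hch := chain I J r v w θ hItop hθW hθ hd0 h0 h1
        intro y hy
        obtain ⟨hyI, hyS⟩ := mem_idealPiece.mp hy
        show y ∈ satSet J (irrel d n)
        refine mem_satSet_of_mul_piece J y w' ?_
        intro s hs
        have hys1 : y * s ∈ I := Ideal.mul_mem_right _ _ hyI
        have hys2 : y * s ∈ coxPiece d n (u + w') :=
          mem_coxPiece.mpr ((mem_coxPiece.mp hyS).mul (mem_coxPiece.mp hs))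
        rw [← hvk] at hys2
        exact hch k (y * s) (mem_idealPiece.mpr ⟨hys1, hys2⟩)
      · push_neg at hru
        have hHF := hIHF u
        rw [HF] at hHF
        have hle : Module.finrank ℂ (idealPiece d n I u)
            ≤ Module.finrank ℂ (coxPiece d n u) :=
          Submodule.finrank_mono inf_le_right
        have h0 : Module.finrank ℂ (idealPiece d n I u) = 0 := by omega
        have hbot : idealPiece d n I u = ⊥ := Submodule.finrank_eq_zero.mp h0
        rw [hbot]
        rintro y hy
        rw [Submodule.mem_bot] at hy
        rw [hy]
        exact K.zero_mem
    have hx' : x ∈ (⨆ u : Fin d → ℕ, idealPiece d n I u) := by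
      rw [← hIhom]
      exact hxI
    have hfin : (⨆ u : Fin d → ℕ, idealPiece d n I u) ≤ K := iSup_le hclaim
    exact hfin hx'
end
end

section
/- Let r ≥ 1, d ≥ 1, n_1,…,n_d ≥ 1, X = ℙ^{n_1}×⋯×ℙ^{n_d} with Cox ring S and irrelevant ideal B(X) as in the context. Let 𝒜 ⊆ ℬ ⊆ ℕ^d be subsets such that u ∈ ℬ and v ∈ ℕ^d imply u+v ∈ ℬ, and u ∈ 𝒜 and v ∈ ℕ^d imply u+v ∈ 𝒜. Then: (a) for every homogeneous ideal I ⊆ S, the graded subspace J ⊆ S with J_u = S_u for u ∈ 𝒜, J_u = I_u for u ∈ ℬ∖𝒜, and J_u = 0 for u ∉ ℬ, is a homogeneous ideal of S; (b) if moreover the set ℬ∖𝒜 is (r,X)-sufficient (i.e. every B(X)-saturated homogeneous ideal I' with H_{S/I'} = h_{r,X} satisfies I' = ((I'_{ℬ∖𝒜}) : B(X)^∞), where (I'_{ℬ∖𝒜}) is the ideal generated by ⋃_{u∈ℬ∖𝒜} I'_u), then any two B(X)-saturated homogeneous ideals I, I' with H_{S/I} = H_{S/I'} = h_{r,X} that have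 the same associated ideal J must be equal. -/
open MvPolynomial

noncomputable section

/-- The graded subspace `J` with `J_u = S_u` for `u ∈ 𝒜`, `J_u = I_u` for `u ∈ ℬ∖𝒜`, and
`J_u = 0` for `u ∉ ℬ`. -/
def truncGraded (d : ℕ) (n : Fin d → ℕ) (A B : Set (Fin d → ℕ))
    (I : Ideal (MvPolynomial (PPVars d n) ℂ)) : Submodule ℂ (MvPolynomial (PPVars d n) ℂ) :=
  ⨆ u : Fin d → ℕ,
    ((⨆ _ : u ∈ A, coxPiece d n u) ⊔ (⨆ _ : u ∈ B \ A, idealPiece d n I u))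

section Aux

variable {d : ℕ} {n : Fin d → ℕ} {A B : Set (Fin d → ℕ)}
  {I : Ideal (MvPolynomial (PPVars d n) ℂ)}

def Jp (d : ℕ) (n : Fin d → ℕ) (A B : Set (Fin d → ℕ))
    (I : Ideal (MvPolynomial (PPVars d n) ℂ)) (u : Fin d → ℕ) :
    Submodule ℂ (MvPolynomial (PPVars d n) ℂ) :=
  (⨆ _ : u ∈ A, coxPiece d n u) ⊔ (⨆ _ : u ∈ B \ A, idealPiece d n I u)

lemma Jp_le_cox (u : Fin d → ℕ) : Jp d n A B I u ≤ coxPiece d n u :=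
  sup_le (iSup_le fun _ => le_rfl) (iSup_le fun _ => inf_le_right)

lemma Jp_of_memA {u : Fin d → ℕ} (hA : u ∈ A) (hAB : A ⊆ B) :
    Jp d n A B I u = coxPiece d n u := by
  have : u ∉ B \ A := fun h => h.2 hA
  rw [Jp, iSup_pos hA, iSup_neg this, sup_bot_eq]

lemma Jp_of_memBA {u : Fin d → ℕ} (h : u ∈ B \ A) :
    Jp d n A B I u = idealPiece d n I u := by
  rw [Jp, iSup_neg h.2, iSup_pos h, bot_sup_eq]

lemma Jp_of_not {u : Fin d → ℕ} (h1 : u ∉ A) (h2 : u ∉ B) :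
    Jp d n A B I u = ⊥ := by
  rw [Jp, iSup_neg h1, iSup_neg (fun h : u ∈ B \ A => h2 h.1), sup_bot_eq]

lemma mem_iSup_cox (g : MvPolynomial (PPVars d n) ℂ) :
    g ∈ ⨆ u : Fin d → ℕ, coxPiece d n u := by
  rw [g.as_sum]
  refine Submodule.sum_mem _ fun v _ => ?_
  exact Submodule.mem_iSup_of_mem (Finsupp.weight (wPP d n) v)
    (isWeightedHomogeneous_monomial _ _ _ rfl)

lemma mul_Jp_mem (hAB : A ⊆ B)
    (hBadd : ∀ u ∈ B, ∀ v : Fin d → ℕ, u + v ∈ B)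
    (hAadd : ∀ u ∈ A, ∀ v : Fin d → ℕ, u + v ∈ A)
    {v : Fin d → ℕ} {g : MvPolynomial (PPVars d n) ℂ} (hg : g ∈ coxPiece d n v)
    {u : Fin d → ℕ} {f : MvPolynomial (PPVars d n) ℂ} (hf : f ∈ Jp d n A B I u) :
    g * f ∈ Jp d n A B I (u + v) := by
  by_cases hA : u ∈ A
  · rw [Jp_of_memA hA hAB] at hf
    rw [Jp_of_memA (hAadd u hA v) hAB]
    have := hf.mul hg
    rw [mul_comm] at this
    exact this
  · by_cases hB : u ∈ B
    · have hu : u ∈ B \ A := ⟨hB, hA⟩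
      rw [Jp_of_memBA hu] at hf
      have hc : g * f ∈ coxPiece d n (u + v) := by
        have := hf.2.mul hg
        rw [mul_comm] at this
        exact this
      have hi : g * f ∈ I := I.mul_mem_left g hf.1
      by_cases hA2 : u + v ∈ A
      · rw [Jp_of_memA hA2 hAB]; exact hc
      · rw [Jp_of_memBA ⟨hBadd u hB v, hA2⟩]; exact ⟨hi, hc⟩
    · rw [Jp_of_not hA hB] at hf
      simp only [Submodule.mem_bot] at hf
      simp [hf]

lemma mul_mem_trunc (hAB : A ⊆ B)
    (hBadd : ∀ u ∈ B, ∀ v : Fin d → ℕ, u + v ∈ B)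
    (hAadd : ∀ u ∈ A, ∀ v : Fin d → ℕ, u + v ∈ A)
    (g f : MvPolynomial (PPVars d n) ℂ)
    (hf : f ∈ ⨆ u : Fin d → ℕ, Jp d n A B I u) :
    g * f ∈ ⨆ u : Fin d → ℕ, Jp d n A B I u := by
  refine Submodule.iSup_induction (motive := fun x => g * x ∈ ⨆ u : Fin d → ℕ, Jp d n A B I u)
    _ hf (fun u x hx => ?_) (by simp) (fun x y hx hy => by rw [mul_add]; exact add_mem hx hy)
  have hgtop : g ∈ ⨆ v : Fin d → ℕ, coxPiece d n v := mem_iSup_cox g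
  refine Submodule.iSup_induction (motive := fun a => a * x ∈ ⨆ u : Fin d → ℕ, Jp d n A B I u)
    _ hgtop (fun v a ha => ?_) (by simp) (fun a b ha hb => by rw [add_mul]; exact add_mem ha hb)
  exact Submodule.mem_iSup_of_mem (u + v) (mul_Jp_mem hAB hBadd hAadd ha hx)

lemma trunc_inf_cox (u : Fin d → ℕ) :
    (⨆ v : Fin d → ℕ, Jp d n A B I v) ⊓ coxPiece d n u = Jp d n A B I u := by
  refine le_antisymm ?_ (le_inf (le_iSup _ u) (Jp_le_cox u))
  rintro f ⟨hf1, hf2⟩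
  have key : weightedHomogeneousComponent (wPP d n) u f ∈ Jp d n A B I u := by
    refine Submodule.iSup_induction
      (motive := fun x => weightedHomogeneousComponent (wPP d n) u x ∈ Jp d n A B I u)
      _ hf1 (fun v y hy => ?_) (by simp) (fun a b ha hb => by rw [map_add]; exact add_mem ha hb)
    have hyc : y ∈ coxPiece d n v := Jp_le_cox v hy
    show weightedHomogeneousComponent (wPP d n) u y ∈ Jp d n A B I u
    by_cases h : u = v
    · subst h
      rw [hyc.weightedHomogeneousComponent_same]
      exact hy
    · rw [hyc.weightedHomogeneousComponent_ne u h]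
      exact zero_mem _
  rwa [hf2.weightedHomogeneousComponent_same] at key

end Aux

/-- Proposition 5.2(a),(c) for products of projective spaces: for subsets `𝒜 ⊆ ℬ ⊆ ℕ^d` closed
under translation, (a) the graded subspace `J` associated to a homogeneous ideal `I` is a
homogeneous ideal, and (b) if `ℬ∖𝒜` is `(r,X)`-sufficient then saturated ideals with Hilbert
function `h_{r,X}` are distinguished by their associated ideals `J`. -/
theorem truncation_is_ideal_and_injective_on_saturated (r d : ℕ) (hr : 1 ≤ r) (hd : 1 ≤ d)
    (n : Fin d → ℕ) (hn : ∀ i, 1 ≤ n i)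
    (A B : Set (Fin d → ℕ)) (hAB : A ⊆ B)
    (hBadd : ∀ u ∈ B, ∀ v : Fin d → ℕ, u + v ∈ B)
    (hAadd : ∀ u ∈ A, ∀ v : Fin d → ℕ, u + v ∈ A) :
    (∀ I : Ideal (MvPolynomial (PPVars d n) ℂ), IsHomog d n I →
      ∃ JI : Ideal (MvPolynomial (PPVars d n) ℂ),
        Submodule.restrictScalars ℂ JI = truncGraded d n A B I ∧
        ∀ u : Fin d → ℕ,
          Submodule.restrictScalars ℂ JI ⊓ coxPiece d n u =
            (⨆ _ : u ∈ A, coxPiece d n u) ⊔ (⨆ _ : u ∈ B \ A, idealPiece d n I u)) ∧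
    ((∀ I' : Ideal (MvPolynomial (PPVars d n) ℂ), IsHomog d n I' →
        satSet I' (irrel d n) = (I' : Set (MvPolynomial (PPVars d n) ℂ)) →
        (∀ u : Fin d → ℕ, HF d n I' u = min (Module.finrank ℂ ↥(coxPiece d n u)) r) →
        satSet (idealFromDegrees d n I' (B \ A)) (irrel d n) =
          (I' : Set (MvPolynomial (PPVars d n) ℂ))) →
      ∀ I I' : Ideal (MvPolynomial (PPVars d n) ℂ),
        IsHomog d n I → IsHomog d n I' →
        satSet I (irrel d n) = (I : Set (MvPolynomial (PPVars d n) ℂ)) →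
        satSet I' (irrel d n) = (I' : Set (MvPolynomial (PPVars d n) ℂ)) →
        (∀ u : Fin d → ℕ, HF d n I u = min (Module.finrank ℂ ↥(coxPiece d n u)) r) →
        (∀ u : Fin d → ℕ, HF d n I' u = min (Module.finrank ℂ ↥(coxPiece d n u)) r) →
        truncGraded d n A B I = truncGraded d n A B I' → I = I') := by
  classical
  have htrunc : ∀ J : Ideal (MvPolynomial (PPVars d n) ℂ),
      truncGraded d n A B J = ⨆ u : Fin d → ℕ, Jp d n A B J u := fun _ => rfl
  constructor
  · intro I hI
    refine ⟨{ carrier := truncGraded d n A B I,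
              add_mem' := fun hx hy => add_mem hx hy,
              zero_mem' := zero_mem _,
              smul_mem' := fun c x hx => by
                exact (show c * x ∈ truncGraded d n A B I from mul_mem_trunc hAB hBadd hAadd c x hx) }, ?_, ?_⟩
    · exact Submodule.ext fun x => Iff.rfl
    · intro u
      exact trunc_inf_cox u
  · intro hsuff I I' hI hI' hsatI hsatI' hHFI hHFI' htr
    have hp : ∀ u ∈ B \ A, idealPiece d n I u = idealPiece d n I' u := by
      intro u hu
      calc idealPiece d n I u = Jp d n A B I u := (Jp_of_memBA hu).symm
        _ = (⨆ v : Fin d → ℕ, Jp d n A B I v) ⊓ coxPiece d n u := (trunc_inf_cox u).symm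
        _ = (⨆ v : Fin d → ℕ, Jp d n A B I' v) ⊓ coxPiece d n u := by
              rw [← htrunc I, ← htrunc I', htr]
        _ = Jp d n A B I' u := trunc_inf_cox u
        _ = idealPiece d n I' u := Jp_of_memBA hu
    have hgen : idealFromDegrees d n I (B \ A) = idealFromDegrees d n I' (B \ A) := by
      unfold idealFromDegrees
      congr 1
      ext f
      constructor
      · rintro ⟨u, hu, h1, h2⟩
        have hm : f ∈ idealPiece d n I' u :=
          (hp u hu) ▸ (show f ∈ idealPiece d n I u from ⟨h1, h2⟩)
        exact ⟨u, hu, hm.1, h2⟩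
      · rintro ⟨u, hu, h1, h2⟩
        have hm : f ∈ idealPiece d n I u :=
          (hp u hu).symm ▸ (show f ∈ idealPiece d n I' u from ⟨h1, h2⟩)
        exact ⟨u, hu, hm.1, h2⟩
    have h1 := hsuff I hI hsatI hHFI
    have h2 := hsuff I' hI' hsatI' hHFI'
    rw [hgen] at h1
    exact SetLike.coe_injective (h1.symm.trans h2)
end
end
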